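/- Let n, m, k be natural numbers, q : (Fin k → ℝ) → (Fin m → ℝ) → ℝ and loss : ℝ → ℝ → ℝ everywhere differentiable functions (jointly in all arguments). For a data point (x, y) ∈ (Fin n → ℝ) × ℝ define Φ_{x,y}(W, θ) = loss (q θ (W.mulVec x)) y on Matrix (Fin m) (Fin n) ℝ × (Fin k → ℝ), and define the gradient-descent step with learning rate η as (W, θ) ↦ (W, θ) − η • ∇Φ_{x,y}(W, θ), where ∇ is the gradient with respect to the standard Euclidean (Frobenius) inner product. Given a dataset d = [(x₁,y₁),…,(x_N,y_N)] and initialization (W₀, θ₀), let (W_t, θ_t) be the iterates obtained by applying the steps for (x₁,y₁),…,(x_t,y_t) in order. Let σ be a permutation of Fin n with permutation matrix P_σ, and let (W'_t, θ'_t) be the iterates on the permuted dataset [(p_σ x₁, y₁),…,(p_σ x_N, y_N)] from initialization (W₀ * P_σᵀ, θ₀). Then for every 0 ≤ t ≤ N, W'_t = W_t * P_σᵀ and θ'_t = θ_t; consequently the trained networks satisfy q θ'_N ((W'_N).mulVec (p_σ x)) = q θ_N (W_N.mulVec x) for every x : Fin n → ℝ. -/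

import Mathlib

open Matrix

attribute [local instance] Matrix.normedAddCommGroup Matrix.normedSpace

/-- The coordinate permutation induced by `σ : Equiv.Perm (Fin n)`:
`(pcoord n σ x) (σ i) = x i`, i.e., `pcoord n σ x = x ∘ σ⁻¹`. -/
def pcoord (n : ℕ) (σ : Equiv.Perm (Fin n)) (x : Fin n → ℝ) : Fin n → ℝ :=
  x ∘ σ.symm

/-- The permutation matrix of `σ : Equiv.Perm (Fin n)`:
`(permMat n σ) i j = if i = σ j then 1 else 0`. -/
def permMat (n : ℕ) (σ : Equiv.Perm (Fin n)) : Matrix (Fin n) (Fin n) ℝ :=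
  Matrix.of fun i j => if i = σ j then 1 else 0

/-- The gradient of `Φ` on `Matrix (Fin m) (Fin n) ℝ × (Fin k → ℝ)` with
respect to the standard Euclidean (Frobenius) inner product: the pair of the
matrix of partial derivatives in the matrix argument and the vector of partial
derivatives in the vector argument. -/
noncomputable def gradPair {m n k : ℕ}
    (Φ : Matrix (Fin m) (Fin n) ℝ × (Fin k → ℝ) → ℝ)
    (p : Matrix (Fin m) (Fin n) ℝ × (Fin k → ℝ)) :
    Matrix (Fin m) (Fin n) ℝ × (Fin k → ℝ) :=
  (Matrix.of fun i j => fderiv ℝ Φ p (Matrix.single i j 1, 0),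
   fun a => fderiv ℝ Φ p (0, Pi.single a 1))

/-- The gradient-descent step with learning rate `η` for the data point
`dat = (x, y)` and the per-example objective
`Φ_{x,y}(W, θ) = loss (q θ (W.mulVec x)) y`. -/
noncomputable def gdStep {m n k : ℕ} (η : ℝ) (loss : ℝ → ℝ → ℝ)
    (q : (Fin k → ℝ) → (Fin m → ℝ) → ℝ)
    (p : Matrix (Fin m) (Fin n) ℝ × (Fin k → ℝ)) (dat : (Fin n → ℝ) × ℝ) :
    Matrix (Fin m) (Fin n) ℝ × (Fin k → ℝ) :=
  p - η • gradPair (fun s => loss (q s.2 (s.1.mulVec dat.1)) dat.2) p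

/-- The iterate after applying the gradient-descent steps for the first `t`
data points of `data`, in order, starting from `init`. -/
noncomputable def gdIter {m n k : ℕ} (η : ℝ) (loss : ℝ → ℝ → ℝ)
    (q : (Fin k → ℝ) → (Fin m → ℝ) → ℝ)
    (init : Matrix (Fin m) (Fin n) ℝ × (Fin k → ℝ))
    (data : List ((Fin n → ℝ) × ℝ)) (t : ℕ) :
    Matrix (Fin m) (Fin n) ℝ × (Fin k → ℝ) :=
  (data.take t).foldl (gdStep η loss q) init

lemma permMat_mulVec {n : ℕ} (σ : Equiv.Perm (Fin n)) (x : Fin n → ℝ) :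
    (permMat n σ).mulVec x = pcoord n σ x := by
  funext i
  simp [permMat, pcoord, Matrix.mulVec, dotProduct, ← Equiv.symm_apply_eq,
    ite_mul]

lemma transpose_permMat_mul {n : ℕ} (σ : Equiv.Perm (Fin n)) :
    (permMat n σ)ᵀ * permMat n σ = 1 := by
  ext i j
  simp [permMat, Matrix.mul_apply, Matrix.one_apply, ← Equiv.symm_apply_eq, ite_mul,
    Equiv.symm_apply_eq, eq_comm]

lemma stdBasis_mul_permMat {n m : ℕ} (σ : Equiv.Perm (Fin n)) (i : Fin m) (j : Fin n) :
    Matrix.single i j (1:ℝ) * permMat n σ = Matrix.single i (σ.symm j) 1 := by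
  ext a b
  rw [Matrix.mul_apply, Finset.sum_eq_single j]
  · simp only [Matrix.single, permMat, Matrix.of_apply, ite_and, mul_ite, mul_one,
      mul_zero, ite_mul, one_mul, zero_mul]
    by_cases h : i = a <;> simp [h, Equiv.eq_symm_apply, eq_comm]
  · intro c _ hc
    simp [Matrix.single, (Ne.symm hc : ¬ j = c)]
  · simp

lemma mul_transpose_permMat_apply {n m : ℕ} (σ : Equiv.Perm (Fin n))
    (G : Matrix (Fin m) (Fin n) ℝ) (i : Fin m) (j : Fin n) :
    (G * (permMat n σ)ᵀ) i j = G i (σ.symm j) := by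
  simp [permMat, Matrix.mul_apply, mul_ite, ← Equiv.symm_apply_eq]

/-- Right multiplication by `P` in the matrix component, as a continuous linear map. -/
noncomputable def rmulCLM (m n k : ℕ) (P : Matrix (Fin n) (Fin n) ℝ) :
    (Matrix (Fin m) (Fin n) ℝ × (Fin k → ℝ)) →L[ℝ]
      (Matrix (Fin m) (Fin n) ℝ × (Fin k → ℝ)) :=
  LinearMap.toContinuousLinearMap
    { toFun := fun s => (s.1 * P, s.2)
      map_add' := by intro a b; simp [Matrix.add_mul]
      map_smul' := by intro c a; simp [Matrix.smul_mul] }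

lemma rmulCLM_apply (m n k : ℕ) (P : Matrix (Fin n) (Fin n) ℝ)
    (s : Matrix (Fin m) (Fin n) ℝ × (Fin k → ℝ)) :
    rmulCLM m n k P s = (s.1 * P, s.2) := rfl

/-- `W ↦ W.mulVec x` as a continuous linear map on the pair. -/
noncomputable def mulVecCLM (m n k : ℕ) (x : Fin n → ℝ) :
    (Matrix (Fin m) (Fin n) ℝ × (Fin k → ℝ)) →L[ℝ] ((Fin k → ℝ) × (Fin m → ℝ)) :=
  LinearMap.toContinuousLinearMap
    { toFun := fun s => (s.2, s.1.mulVec x)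
      map_add' := by intro a b; simp [Matrix.add_mulVec]
      map_smul' := by intro c a; simp [Matrix.smul_mulVec] }

lemma diff_obj {m n k : ℕ} (q : (Fin k → ℝ) → (Fin m → ℝ) → ℝ) (loss : ℝ → ℝ → ℝ)
    (hq : Differentiable ℝ fun p : (Fin k → ℝ) × (Fin m → ℝ) => q p.1 p.2)
    (hloss : Differentiable ℝ fun p : ℝ × ℝ => loss p.1 p.2)
    (x : Fin n → ℝ) (y : ℝ) :
    Differentiable ℝ (fun s : Matrix (Fin m) (Fin n) ℝ × (Fin k → ℝ) =>
      loss (q s.2 (s.1.mulVec x)) y) := by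
  have h1 : Differentiable ℝ (fun s : Matrix (Fin m) (Fin n) ℝ × (Fin k → ℝ) =>
      q s.2 (s.1.mulVec x)) := hq.comp (mulVecCLM m n k x).differentiable
  exact hloss.comp (h1.prodMk (differentiable_const y))

lemma gdStep_perm {m n k : ℕ} (η : ℝ) (loss : ℝ → ℝ → ℝ)
    (q : (Fin k → ℝ) → (Fin m → ℝ) → ℝ)
    (hq : Differentiable ℝ fun p : (Fin k → ℝ) × (Fin m → ℝ) => q p.1 p.2)
    (hloss : Differentiable ℝ fun p : ℝ × ℝ => loss p.1 p.2)
    (σ : Equiv.Perm (Fin n)) (p : Matrix (Fin m) (Fin n) ℝ × (Fin k → ℝ))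
    (x : Fin n → ℝ) (y : ℝ) :
    gdStep η loss q (p.1 * (permMat n σ)ᵀ, p.2) (pcoord n σ x, y) =
      ((gdStep η loss q p (x, y)).1 * (permMat n σ)ᵀ,
        (gdStep η loss q p (x, y)).2) := by
  set P := permMat n σ with hP
  set Φ : Matrix (Fin m) (Fin n) ℝ × (Fin k → ℝ) → ℝ :=
    fun s => loss (q s.2 (s.1.mulVec x)) y with hΦdef
  have hΦ : Differentiable ℝ Φ := diff_obj q loss hq hloss x y
  set L := rmulCLM m n k P with hLdef
  have hcomp : (fun s : Matrix (Fin m) (Fin n) ℝ × (Fin k → ℝ) =>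
      loss (q s.2 (s.1.mulVec (pcoord n σ x))) y) = Φ ∘ L := by
    funext s
    simp only [Function.comp_apply, hLdef, rmulCLM_apply, hΦdef]
    rw [← permMat_mulVec σ x, Matrix.mulVec_mulVec]
  have hLp : L (p.1 * Pᵀ, p.2) = p := by
    rw [hLdef, rmulCLM_apply]
    simp [hP, Matrix.mul_assoc, transpose_permMat_mul σ]
  have hgrad : ∀ v, fderiv ℝ (fun s : Matrix (Fin m) (Fin n) ℝ × (Fin k → ℝ) =>
      loss (q s.2 (s.1.mulVec (pcoord n σ x))) y) (p.1 * Pᵀ, p.2) v =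
      fderiv ℝ Φ p (L v) := by
    intro v
    rw [hcomp]
    erw [fderiv_comp (x := (p.1 * Pᵀ, p.2)) (hg := hΦ.differentiableAt) (hf := L.differentiableAt),
      ContinuousLinearMap.fderiv, hLp]
    rfl
  have hgp : gradPair (fun s : Matrix (Fin m) (Fin n) ℝ × (Fin k → ℝ) =>
      loss (q s.2 (s.1.mulVec (pcoord n σ x))) y) (p.1 * Pᵀ, p.2) =
      ((gradPair Φ p).1 * Pᵀ, (gradPair Φ p).2) := by
    unfold gradPair
    refine Prod.ext ?_ ?_
    · dsimp only
      ext i j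
      rw [Matrix.of_apply, hgrad, mul_transpose_permMat_apply σ]
      simp only [rmulCLM_apply, hLdef]
      rw [show ((Matrix.single i j (1:ℝ), (0 : Fin k → ℝ)).1 * P,
        (Matrix.single i j (1:ℝ), (0 : Fin k → ℝ)).2) =
        ((Matrix.single i (σ.symm j) (1:ℝ), (0 : Fin k → ℝ))) from by
          simp [hP, stdBasis_mul_permMat σ]]
      rfl
    · dsimp only
      funext a
      rw [hgrad]
      simp only [hLdef, rmulCLM_apply, Matrix.zero_mul]
  show (p.1 * Pᵀ, p.2) - η • gradPair _ _ = _
  rw [hgp]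
  unfold gdStep
  refine Prod.ext ?_ ?_
  · show p.1 * Pᵀ - η • ((gradPair Φ p).1 * Pᵀ) = (p.1 - η • (gradPair Φ p).1) * Pᵀ
    rw [Matrix.sub_mul, Matrix.smul_mul]
  · rfl

lemma foldl_perm {m n k : ℕ} (η : ℝ) (loss : ℝ → ℝ → ℝ)
    (q : (Fin k → ℝ) → (Fin m → ℝ) → ℝ)
    (hq : Differentiable ℝ fun p : (Fin k → ℝ) × (Fin m → ℝ) => q p.1 p.2)
    (hloss : Differentiable ℝ fun p : ℝ × ℝ => loss p.1 p.2)
    (σ : Equiv.Perm (Fin n)) :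
    ∀ (l : List ((Fin n → ℝ) × ℝ)) (p : Matrix (Fin m) (Fin n) ℝ × (Fin k → ℝ)),
      (l.map fun d => (pcoord n σ d.1, d.2)).foldl (gdStep η loss q)
          (p.1 * (permMat n σ)ᵀ, p.2) =
        ((l.foldl (gdStep η loss q) p).1 * (permMat n σ)ᵀ,
          (l.foldl (gdStep η loss q) p).2) := by
  intro l
  induction l with
  | nil => intro p; rfl
  | cons d tl ih =>
    intro p
    obtain ⟨x, y⟩ := d
    simp only [List.map_cons, List.foldl_cons]
    rw [gdStep_perm η loss q hq hloss σ p x y, ih]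

/-- equivariance of gradient-descent training under input
coordinate permutations: training on the permuted dataset
`[(p_σ x₁, y₁),…,(p_σ x_N, y_N)]` from the initialization `(W₀ * P_σᵀ, θ₀)`
yields, at every time `0 ≤ t ≤ N`, exactly the conjugated iterates
`(W_t * P_σᵀ, θ_t)`; consequently the trained networks compute the same
function of correspondingly permuted inputs. -/
theorem stmt_15 (n m k : ℕ)
    (q : (Fin k → ℝ) → (Fin m → ℝ) → ℝ) (loss : ℝ → ℝ → ℝ)
    (hq : Differentiable ℝ fun p : (Fin k → ℝ) × (Fin m → ℝ) => q p.1 p.2)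
    (hloss : Differentiable ℝ fun p : ℝ × ℝ => loss p.1 p.2)
    (η : ℝ) (d : List ((Fin n → ℝ) × ℝ))
    (W₀ : Matrix (Fin m) (Fin n) ℝ) (θ₀ : Fin k → ℝ)
    (σ : Equiv.Perm (Fin n)) :
    (∀ t ≤ d.length,
      gdIter η loss q (W₀ * (permMat n σ)ᵀ, θ₀)
          (d.map fun p => (pcoord n σ p.1, p.2)) t =
        ((gdIter η loss q (W₀, θ₀) d t).1 * (permMat n σ)ᵀ,
          (gdIter η loss q (W₀, θ₀) d t).2)) ∧
    ∀ x : Fin n → ℝ,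
      q (gdIter η loss q (W₀ * (permMat n σ)ᵀ, θ₀)
            (d.map fun p => (pcoord n σ p.1, p.2)) d.length).2
        ((gdIter η loss q (W₀ * (permMat n σ)ᵀ, θ₀)
            (d.map fun p => (pcoord n σ p.1, p.2)) d.length).1.mulVec
          (pcoord n σ x)) =
      q (gdIter η loss q (W₀, θ₀) d d.length).2
        ((gdIter η loss q (W₀, θ₀) d d.length).1.mulVec x) := by
  have key : ∀ t, gdIter η loss q (W₀ * (permMat n σ)ᵀ, θ₀)
      (d.map fun p => (pcoord n σ p.1, p.2)) t =
      ((gdIter η loss q (W₀, θ₀) d t).1 * (permMat n σ)ᵀ,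
        (gdIter η loss q (W₀, θ₀) d t).2) := by
    intro t
    unfold gdIter
    rw [← List.map_take]
    exact foldl_perm η loss q hq hloss σ (d.take t) (W₀, θ₀)
  refine ⟨fun t _ => key t, fun x => ?_⟩
  rw [key d.length]
  rw [← permMat_mulVec σ x, Matrix.mulVec_mulVec, Matrix.mul_assoc,
    transpose_permMat_mul σ, Matrix.mul_one]
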